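/- Let T be an ergodic measure-preserving automorphism of a standard probability space (X, S, μ) and f : X → ℝ a Borel map. If f satisfies the weak law of large numbers, i.e. f(n, ·)/n → 0 in measure as n → ∞, then f is recurrent. -/

import Mathlib

open MeasureTheory Filter Topology
open scoped ENNReal NNReal

noncomputable section

/-- The cocycle sums `f(n, x) = f(x) + f(Tx) + ⋯ + f(T^{n-1}x)` for `n ∈ ℕ`. -/
def birkhoff {X E : Type*} [AddCommMonoid E] (T : X → X) (f : X → E) (n : ℕ) (x : X) : E :=
  ∑ i ∈ Finset.range n, f (T^[i] x)

/-- A cocycle is recurrent if `liminf_{n → ∞} ‖f(n, x)‖ = 0` for a.e. `x`. -/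
def Recurrent {X E : Type*} [MeasurableSpace X] [NormedAddCommGroup E]
    (T : X → X) (f : X → E) (μ : Measure X) : Prop :=
  ∀ᵐ x ∂μ, Filter.liminf (fun n : ℕ => ‖birkhoff T f n x‖) Filter.atTop = 0

/-- The recurrence set `R(f) = {c : f - c is recurrent}`. -/
def recSet {X E : Type*} [MeasurableSpace X] [NormedAddCommGroup E]
    (T : X → X) (f : X → E) (μ : Measure X) : Set E :=
  {c | Recurrent T (fun x => f x - c) μ}

/-- The `n`-th power of the automorphism `T`, for `n : ℤ`. -/
def zIter {X : Type*} [MeasurableSpace X] (T : X ≃ᵐ X) (n : ℤ) (x : X) : X :=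
  if 0 ≤ n then (⇑T)^[n.toNat] x else (⇑T.symm)^[(-n).toNat] x

/-- The cocycle `f(n, x)` for `n : ℤ`: `f(n,x)` is the `n`-term Birkhoff sum for `n ≥ 0`,
and `f(n, x) = -f(-n, T^n x)` for `n < 0`. -/
def zcocycle {X E : Type*} [MeasurableSpace X] [AddCommGroup E] (T : X ≃ᵐ X) (f : X → E)
    (n : ℤ) (x : X) : E :=
  if 0 ≤ n then birkhoff (⇑T) f n.toNat x
  else - birkhoff (⇑T) f (-n).toNat (zIter T n x)

/-- The `n`-th power (`n : ℤ`) of the skew-product `T_f(x, g) = (Tx, f(x) + g)`,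
i.e. `T_f^n (x, g) = (T^n x, f(n, x) + g)`. -/
def zSkew {X E : Type*} [MeasurableSpace X] [AddCommGroup E] (T : X ≃ᵐ X) (f : X → E)
    (n : ℤ) (p : X × E) : X × E :=
  (zIter T n p.1, zcocycle T f n p.1 + p.2)

lemma birkhoff_eq_birkhoffSum {X : Type*} (T : X → X) (f : X → ℝ) :
    birkhoff T f = birkhoffSum T f := rfl

lemma birkhoff_add {X : Type*} (T : X → X) (f : X → ℝ) (m n : ℕ) (x : X) :
    birkhoff T f (m + n) x = birkhoff T f m x + birkhoff T f n (T^[m] x) := by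
  rw [birkhoff_eq_birkhoffSum]; exact birkhoffSum_add T f m n x

lemma birkhoff_meas {X : Type*} [MeasurableSpace X] {T : X → X} (hT : Measurable T)
    {f : X → ℝ} (hf : Measurable f) (n : ℕ) : Measurable (birkhoff T f n) :=
  Finset.measurable_sum _ (fun i _ => hf.comp (hT.iterate i))

set_option maxHeartbeats 1000000 in
lemma atkinson_aux {X : Type*} [MeasurableSpace X]
    (μ : Measure X) [IsProbabilityMeasure μ] (T : X → X) (hTm : Measurable T)
    (hT : MeasurePreserving T μ μ)
    (f : X → ℝ) (hf : Measurable f)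
    (ε : ℝ) (hε : 0 < ε) (N : ℕ) (hN : 1 ≤ N)
    (A : Set X) (hA : MeasurableSet A) (hApos : 0 < μ A)
    (hAp : ∀ x ∈ A, ∀ n, N ≤ n → ε ≤ |birkhoff T f n x|)
    (hwlln : ∀ δ : ℝ, 0 < δ →
      Tendsto (fun n : ℕ => μ {x | δ < |birkhoff T f n x / (n : ℝ)|}) atTop (𝓝 0)) :
    False := by
  classical
  have hbf : ∀ n, Measurable (birkhoff T f n) := birkhoff_meas hTm hf
  set β : ℝ := (μ A).toReal with hβdef
  have hβ : 0 < β := ENNReal.toReal_pos hApos.ne' (measure_ne_top μ A)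
  have hβA : ENNReal.ofReal β = μ A := ENNReal.ofReal_toReal (measure_ne_top μ A)
  have hNR : (0:ℝ) < N := by exact_mod_cast hN
  set δ : ℝ := ε * β / (32 * N) with hδdef
  have hδ : 0 < δ := by positivity
  set p : ℕ → ℝ≥0∞ := fun m => μ {x | δ < |birkhoff T f m x / (m:ℝ)|} with hpdef
  have hp : Tendsto p atTop (𝓝 0) := hwlln δ hδ
  set q : ℕ → ℝ := fun m => (p m).toReal with hqdef
  have hq : Tendsto q atTop (𝓝 0) := by
    have := (ENNReal.tendsto_toReal (by simp)).comp hp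
    exact this
  -- key estimate
  have key : ∀ M : ℕ, 4 / β ≤ (M:ℝ) → 6 * N / β ≤ (M:ℝ) → 1 ≤ M →
      β ^ 2 / 16 * M ≤ ∑ m ∈ Finset.range M, q m := by
    intro M hM4 hM6 hM1
    have hMR : (0:ℝ) < M := by exact_mod_cast hM1
    set K : ℝ := δ * M with hKdef
    have hK : 0 < K := by positivity
    set s : X → Finset ℕ := fun x => (Finset.range M).filter (fun m => T^[m] x ∈ A) with hsdef
    set L : ℕ := ⌈(M:ℝ) * β / 2⌉₊ with hLdef
    set C : ℕ := N * (⌊2 * K / ε⌋₊ + 1) with hCdef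
    set E : Set X := {x | L ≤ (s x).card} with hEdef
    set cnt : X → ℕ := fun x => (s x).card with hcntdef
    have hcnt_eq : ∀ x, cnt x = ∑ m ∈ Finset.range M, if T^[m] x ∈ A then 1 else 0 := by
      intro x; simp only [hcntdef, hsdef, Finset.card_filter]
    have hcnt : Measurable cnt := by
      simp only [funext hcnt_eq]
      exact Finset.measurable_sum _ (fun m _ =>
        Measurable.ite ((hTm.iterate m) hA) measurable_const measurable_const)
    have hE : MeasurableSet E := hcnt (by trivial)
    -- (i) expected number of visits
    have hint : ∫⁻ x, (cnt x : ℝ≥0∞) ∂μ = M * μ A := by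
      have : ∀ x, ((cnt x : ℝ≥0∞)) =
          ∑ m ∈ Finset.range M, Set.indicator ((fun y => T^[m] y) ⁻¹' A) (fun _ => 1) x := by
        intro x
        rw [hcnt_eq x]
        push_cast
        refine Finset.sum_congr rfl fun m _ => ?_
        by_cases h : T^[m] x ∈ A <;> simp [Set.indicator_apply, h]
      simp only [this]
      rw [lintegral_finset_sum]
      · have : ∀ m ∈ Finset.range M,
            ∫⁻ x, Set.indicator ((fun y => T^[m] y) ⁻¹' A) (fun _ => (1:ℝ≥0∞)) x ∂μ = μ A := by
          intro m _
          rw [lintegral_indicator ((hTm.iterate m) hA), setLIntegral_const, one_mul]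
          exact (hT.iterate m).measure_preimage hA.nullMeasurableSet
        rw [Finset.sum_congr rfl this, Finset.sum_const, Finset.card_range, nsmul_eq_mul]
      · intro m _
        exact (measurable_const.indicator ((hTm.iterate m) hA))
    -- Markov
    have hmark : (M : ℝ≥0∞) * μ A ≤ M * μ E + L := by
      rw [← hint]
      have hpt : ∀ x, (cnt x : ℝ≥0∞) ≤ E.indicator (fun _ => (M:ℝ≥0∞)) x + L := by
        intro x
        by_cases hx : x ∈ E
        · have : cnt x ≤ M := by
            simpa [hcntdef, hsdef] using Finset.card_filter_le (Finset.range M) _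
          calc (cnt x : ℝ≥0∞) ≤ M := by exact_mod_cast this
            _ ≤ _ := by simp [Set.indicator_of_mem hx]
        · have : cnt x ≤ L := le_of_not_ge (by simpa [hEdef, hcntdef] using hx)
          calc (cnt x : ℝ≥0∞) ≤ L := by exact_mod_cast this
            _ ≤ _ := by simp [Set.indicator_of_notMem hx]
      calc ∫⁻ x, (cnt x : ℝ≥0∞) ∂μ ≤ ∫⁻ x, (E.indicator (fun _ => (M:ℝ≥0∞)) x + L) ∂μ :=
            lintegral_mono hpt
        _ = M * μ E + L := by
            rw [lintegral_add_right _ measurable_const, lintegral_indicator hE,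
              setLIntegral_const, lintegral_const, measure_univ, mul_one]
    have hμE1 : μ E ≠ ∞ := measure_ne_top μ E
    set e : ℝ := (μ E).toReal with hedef
    have hmarkR : β * M ≤ M * e + L := by
      have h1 : ((M : ℝ≥0∞) * μ A).toReal = β * M := by
        rw [ENNReal.toReal_mul]; simp [hβdef, mul_comm]
      have h2 : ((M:ℝ≥0∞) * μ E + L).toReal = M * e + L := by
        rw [ENNReal.toReal_add (by finiteness) (by finiteness), ENNReal.toReal_mul]
        simp [hedef]
      have := ENNReal.toReal_mono (by finiteness) hmark
      rwa [h1, h2] at this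
    have hL_le : (L:ℝ) ≤ M * β / 2 + 1 := le_of_lt (Nat.ceil_lt_add_one (by positivity))
    have he : β / 4 ≤ e := by
      have h1 : (1:ℝ) ≤ β * M / 4 := by
        rw [div_le_iff₀ hβ] at hM4; nlinarith
      nlinarith
    -- separation
    have hsep : ∀ x, ∀ m ∈ s x, ∀ n ∈ s x, m + N ≤ n →
        ε ≤ |birkhoff T f n x - birkhoff T f m x| := by
      intro x m hm n hn hmn
      have hmA : T^[m] x ∈ A := (Finset.mem_filter.mp hm).2
      have h1 : birkhoff T f n x = birkhoff T f m x + birkhoff T f (n - m) (T^[m] x) := by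
        conv_lhs => rw [show n = m + (n - m) by omega]
        exact birkhoff_add T f m (n - m) x
      rw [h1]
      simpa using hAp _ hmA (n - m) (by omega)
    -- counting small values
    have hcount : ∀ x, ((s x).filter (fun m => |birkhoff T f m x| ≤ K)).card ≤ C := by
      intro x
      set s1 := (s x).filter (fun m => |birkhoff T f m x| ≤ K) with hs1def
      set φ : ℕ → ℤ := fun m => ⌊(birkhoff T f m x + K) / ε⌋ with hφdef
      have hfib : ∀ a ∈ s1.image φ, (s1.filter (fun m => φ m = a)).card ≤ N := by
        intro a _
        set t := s1.filter (fun m => φ m = a) with htdef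
        by_cases ht : t.Nonempty
        · set m₀ := t.min' ht with hm₀
          have hsub : t ⊆ Finset.Ico m₀ (m₀ + N) := by
            intro m hm
            rw [Finset.mem_Ico]
            refine ⟨t.min'_le m hm, ?_⟩
            by_contra hcon
            push_neg at hcon
            have hm₀t : m₀ ∈ t := t.min'_mem ht
            have hm₀s : m₀ ∈ s x := Finset.mem_of_mem_filter _ (Finset.mem_of_mem_filter _ hm₀t)
            have hms : m ∈ s x := Finset.mem_of_mem_filter _ (Finset.mem_of_mem_filter _ hm)
            have h2 := hsep x m₀ hm₀s m hms hcon
            have hφm : φ m = a := (Finset.mem_filter.mp hm).2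
            have hφm₀ : φ m₀ = a := (Finset.mem_filter.mp hm₀t).2
            set u := (birkhoff T f m x + K) / ε with hudef
            set v := (birkhoff T f m₀ x + K) / ε with hvdef
            have huv : |u - v| < 1 := by
              have h3 : ⌊u⌋ = ⌊v⌋ := hφm.trans hφm₀.symm
              have h4 := Int.floor_le u
              have h5 := Int.floor_le v
              have h6 := Int.lt_floor_add_one u
              have h7 := Int.lt_floor_add_one v
              rw [h3] at h4 h6
              rw [abs_lt]
              constructor <;> linarith
            have h8 : birkhoff T f m x - birkhoff T f m₀ x = (u - v) * ε := by
              rw [hudef, hvdef, sub_mul, div_mul_cancel₀ _ hε.ne', div_mul_cancel₀ _ hε.ne']; ring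
            have h9 : |birkhoff T f m x - birkhoff T f m₀ x| < ε := by
              rw [h8, abs_mul, abs_of_pos hε]
              nlinarith [abs_nonneg (u - v)]
            linarith
          calc t.card ≤ (Finset.Ico m₀ (m₀ + N)).card := Finset.card_le_card hsub
            _ = N := by simp
        · rw [Finset.not_nonempty_iff_eq_empty] at ht
          simp [← htdef, ht]
      have h1 : s1.card ≤ N * (s1.image φ).card := Finset.card_le_mul_card_image s1 N hfib
      have h2 : s1.image φ ⊆ Finset.Icc 0 ⌊2 * K / ε⌋ := by
        intro a ha
        obtain ⟨m, hm, rfl⟩ := Finset.mem_image.mp ha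
        have hmK : |birkhoff T f m x| ≤ K := (Finset.mem_filter.mp hm).2
        rw [abs_le] at hmK
        rw [Finset.mem_Icc]
        constructor
        · exact Int.floor_nonneg.mpr (div_nonneg (by linarith) hε.le)
        · exact Int.floor_le_floor ((div_le_div_iff_of_pos_right hε).mpr (by linarith))
      have h3 : (s1.image φ).card ≤ ⌊2 * K / ε⌋₊ + 1 := by
        calc (s1.image φ).card ≤ (Finset.Icc (0:ℤ) ⌊2 * K / ε⌋).card := Finset.card_le_card h2
          _ = (⌊2 * K / ε⌋ + 1).toNat := by rw [Int.card_Icc]; ring_nf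
          _ = ⌊2 * K / ε⌋₊ + 1 := by
              rw [Int.toNat_add (Int.floor_nonneg.mpr (by positivity)) (by norm_num),
                Int.floor_toNat]
              simp
      calc s1.card ≤ N * (s1.image φ).card := h1
        _ ≤ C := Nat.mul_le_mul_left N h3
    -- on E, many big values
    have hbig : ∀ x ∈ E, ((L - C : ℕ) : ℝ≥0∞) ≤
        (((Finset.range M).filter (fun m => K < |birkhoff T f m x|)).card : ℝ≥0∞) := by
      intro x hx
      have hxE : L ≤ (s x).card := hx
      have hsplit : ((s x).filter (fun m => |birkhoff T f m x| ≤ K)).card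
          + ((s x).filter (fun m => ¬ |birkhoff T f m x| ≤ K)).card = (s x).card :=
        Finset.card_filter_add_card_filter_not _
      have hsub : (s x).filter (fun m => ¬ |birkhoff T f m x| ≤ K) ⊆
          (Finset.range M).filter (fun m => K < |birkhoff T f m x|) := by
        intro m hm
        rw [Finset.mem_filter] at hm ⊢
        exact ⟨Finset.mem_of_mem_filter _ hm.1, lt_of_not_ge hm.2⟩
      have h4 : L - C ≤ ((Finset.range M).filter (fun m => K < |birkhoff T f m x|)).card := by
        have h5 := hcount x
        have h6 := Finset.card_le_card hsub
        omega
      exact_mod_cast h4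
    -- integrate
    have hii : ((L - C : ℕ) : ℝ≥0∞) * μ E ≤
        ∑ m ∈ Finset.range M, μ {x | K < |birkhoff T f m x|} := by
      have hmeas : ∀ m : ℕ, MeasurableSet {x | K < |birkhoff T f m x|} :=
        fun m => measurableSet_lt measurable_const (hbf m).abs
      have hpt : ∀ x, E.indicator (fun _ => ((L - C : ℕ) : ℝ≥0∞)) x ≤
          ∑ m ∈ Finset.range M, Set.indicator {y | K < |birkhoff T f m y|} (fun _ => 1) x := by
        intro x
        by_cases hx : x ∈ E
        · rw [Set.indicator_of_mem hx]
          refine le_trans (hbig x hx) (le_of_eq ?_)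
          rw [Finset.card_filter]
          push_cast
          refine Finset.sum_congr rfl fun m _ => ?_
          by_cases h : K < |birkhoff T f m x| <;> simp [Set.indicator_apply, h, Set.mem_setOf_eq]
        · simp [Set.indicator_of_notMem hx]
      calc ((L - C : ℕ) : ℝ≥0∞) * μ E
          = ∫⁻ x, E.indicator (fun _ => ((L - C : ℕ) : ℝ≥0∞)) x ∂μ := by
            rw [lintegral_indicator hE, setLIntegral_const]
        _ ≤ ∫⁻ x, ∑ m ∈ Finset.range M,
              Set.indicator {y | K < |birkhoff T f m y|} (fun _ => (1:ℝ≥0∞)) x ∂μ :=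
            lintegral_mono hpt
        _ = ∑ m ∈ Finset.range M, μ {x | K < |birkhoff T f m x|} := by
            rw [lintegral_finset_sum _ (fun m _ => measurable_const.indicator (hmeas m))]
            refine Finset.sum_congr rfl fun m _ => ?_
            rw [lintegral_indicator (hmeas m), setLIntegral_const, one_mul]
    -- compare with p m
    have hiii : ∀ m ∈ Finset.range M, μ {x | K < |birkhoff T f m x|} ≤ p m := by
      intro m hm
      rcases Nat.eq_zero_or_pos m with rfl | hm1
      · have : {x | K < |birkhoff T f 0 x|} = ∅ := by
          ext x
          simp [birkhoff, not_lt.mpr hK.le]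
        simp [this]
      · apply measure_mono
        intro x hx
        simp only [Set.mem_setOf_eq] at hx ⊢
        have hmM : (m:ℝ) < M := by exact_mod_cast Finset.mem_range.mp hm
        have hmR : (0:ℝ) < m := by exact_mod_cast hm1
        rw [abs_div, abs_of_pos hmR, lt_div_iff₀ hmR]
        have h9 : δ * m < K := by rw [hKdef]; exact mul_lt_mul_of_pos_left hmM hδ
        linarith [hx, h9]
    have hsum : ((L - C : ℕ) : ℝ≥0∞) * μ E ≤ ∑ m ∈ Finset.range M, p m :=
      le_trans hii (Finset.sum_le_sum hiii)
    -- convert to reals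
    have hfin : ∀ m ∈ Finset.range M, p m ≠ ∞ := fun m _ => measure_ne_top μ _
    have hsumR : ((L - C : ℕ) : ℝ) * e ≤ ∑ m ∈ Finset.range M, q m := by
      have h1 := ENNReal.toReal_mono (ENNReal.sum_lt_top.mpr (fun m hm => (hfin m hm).lt_top)).ne hsum
      rwa [ENNReal.toReal_mul, ENNReal.toReal_sum hfin, ENNReal.toReal_natCast] at h1
    -- final arithmetic
    have hL_ge : (M:ℝ) * β / 2 ≤ L := Nat.le_ceil _
    have hC_le : (C:ℝ) ≤ M * β / 16 + N := by
      have h1 : (⌊2 * K / ε⌋₊ : ℝ) ≤ 2 * K / ε := Nat.floor_le (by positivity)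
      have h2 : 2 * K / ε = β * M / (16 * N) := by
        rw [hKdef, hδdef]; field_simp; ring
      have h3 : (C:ℝ) = N * ((⌊2 * K / ε⌋₊ : ℝ) + 1) := by rw [hCdef]; push_cast; ring
      rw [h3]
      have h4 : (⌊2 * K / ε⌋₊ : ℝ) + 1 ≤ β * M / (16 * N) + 1 := by rw [← h2]; linarith
      calc (N:ℝ) * ((⌊2 * K / ε⌋₊:ℝ) + 1) ≤ N * (β * M / (16 * N) + 1) :=
            mul_le_mul_of_nonneg_left h4 hNR.le
        _ = M * β / 16 + N := by field_simp
    have hNβ : (N:ℝ) ≤ β * M / 6 := by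
      rw [div_le_iff₀ hβ] at hM6; linarith
    have hCLlt : (C:ℝ) < L := by nlinarith
    have hCL : C ≤ L := le_of_lt (by exact_mod_cast hCLlt)
    have hLC : (M:ℝ) * β / 4 ≤ ((L - C : ℕ) : ℝ) := by
      rw [Nat.cast_sub hCL]
      nlinarith
    calc β ^ 2 / 16 * M = (M * β / 4) * (β / 4) := by ring
      _ ≤ ((L - C : ℕ) : ℝ) * e := by
          apply mul_le_mul hLC he (by positivity) (le_trans (by positivity) hLC)
      _ ≤ ∑ m ∈ Finset.range M, q m := hsumR
  -- contradiction via Cesàro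
  have hces := hq.cesaro
  have hev : ∀ᶠ M : ℕ in atTop, ((M:ℝ))⁻¹ * ∑ m ∈ Finset.range M, q m < β ^ 2 / 16 := by
    exact hces.eventually_lt_const (by positivity)
  obtain ⟨M, hM1, hM4, hM6, hlt⟩ : ∃ M : ℕ, 1 ≤ M ∧ 4 / β ≤ (M:ℝ) ∧ 6 * N / β ≤ (M:ℝ)
      ∧ ((M:ℝ))⁻¹ * ∑ m ∈ Finset.range M, q m < β ^ 2 / 16 := by
    have h1 : ∀ᶠ M : ℕ in atTop, 1 ≤ M := eventually_ge_atTop 1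
    have h2 : ∀ᶠ M : ℕ in atTop, 4 / β ≤ (M:ℝ) :=
      (tendsto_natCast_atTop_atTop.eventually_ge_atTop (4 / β))
    have h3 : ∀ᶠ M : ℕ in atTop, 6 * N / β ≤ (M:ℝ) :=
      (tendsto_natCast_atTop_atTop.eventually_ge_atTop (6 * N / β))
    exact ((h1.and (h2.and (h3.and hev))).exists).imp (fun M h => ⟨h.1, h.2.1, h.2.2.1, h.2.2.2⟩)
  have hMR : (0:ℝ) < M := by exact_mod_cast hM1
  have hk := key M hM4 hM6 hM1
  have : β ^ 2 / 16 ≤ ((M:ℝ))⁻¹ * ∑ m ∈ Finset.range M, q m := by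
    rw [le_inv_mul_iff₀ hMR]
    linarith [hk]
  linarith

lemma liminf_zero_of_small {X : Type*} (T : X → X) (f : X → ℝ) (x : X)
    (h : ∀ k N : ℕ, ∃ n, N ≤ n ∧ |birkhoff T f n x| < 1 / ((k:ℝ) + 1)) :
    Filter.liminf (fun n : ℕ => ‖birkhoff T f n x‖) Filter.atTop = 0 := by
  rw [Filter.liminf_eq]
  have h0 : (0:ℝ) ∈ {a | ∀ᶠ n : ℕ in atTop, a ≤ ‖birkhoff T f n x‖} :=
    Eventually.of_forall fun n => norm_nonneg _
  have hle : ∀ a ∈ {a | ∀ᶠ n : ℕ in atTop, a ≤ ‖birkhoff T f n x‖}, a ≤ 0 := by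
    intro a ha
    by_contra hpos
    push_neg at hpos
    obtain ⟨k, hk⟩ := exists_nat_one_div_lt hpos
    obtain ⟨N₀, hN₀⟩ := eventually_atTop.mp ha
    obtain ⟨n, hn, hsmall⟩ := h k N₀
    have h1 := hN₀ n hn
    rw [Real.norm_eq_abs] at h1
    linarith
  exact le_antisymm (csSup_le ⟨0, h0⟩ hle) (le_csSup ⟨0, hle⟩ h0)

theorem stmt3 {X : Type*} [MeasurableSpace X] [StandardBorelSpace X]
    (μ : Measure X) [IsProbabilityMeasure μ] (T : X ≃ᵐ X) (hT : Ergodic (⇑T) μ)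
    (f : X → ℝ) (hf : Measurable f)
    (hwlln : ∀ δ : ℝ, 0 < δ →
      Tendsto (fun n : ℕ => μ {x | δ < |birkhoff (⇑T) f n x / (n : ℝ)|}) atTop (𝓝 0)) :
    Recurrent (⇑T) f μ := by
  by_contra hrec
  set Aset : ℝ → ℕ → Set X := fun ε N => {x | ∀ n, N ≤ n → ε ≤ |birkhoff (⇑T) f n x|}
    with hAsetdef
  have hnull : ¬ (∀ k N : ℕ, μ (Aset (1 / ((k:ℝ) + 1)) N) = 0) := by
    intro hall
    apply hrec
    have hU : μ (⋃ k : ℕ, ⋃ N : ℕ, Aset (1 / ((k:ℝ) + 1)) N) = 0 :=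
      measure_iUnion_null fun k => measure_iUnion_null fun N => hall k N
    rw [← compl_mem_ae_iff] at hU
    unfold Recurrent
    filter_upwards [hU] with x hx
    apply liminf_zero_of_small
    intro k N
    have hx' : x ∉ Aset (1 / ((k:ℝ) + 1)) N := by
      intro hmem
      exact hx (Set.mem_iUnion.mpr ⟨k, Set.mem_iUnion.mpr ⟨N, hmem⟩⟩)
    rw [hAsetdef] at hx'
    simp only [Set.mem_setOf_eq, not_forall, not_le] at hx'
    obtain ⟨n, hn1, hn2⟩ := hx'
    exact ⟨n, hn1, hn2⟩
  push_neg at hnull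
  obtain ⟨k, N, hkN⟩ := hnull
  set ε : ℝ := 1 / ((k:ℝ) + 1) with hεdef
  have hε : 0 < ε := by positivity
  have hAmeas : MeasurableSet (Aset ε N) := by
    have : Aset ε N = ⋂ n : ℕ, {x | N ≤ n → ε ≤ |birkhoff (⇑T) f n x|} := by
      ext x; simp [hAsetdef, Set.mem_iInter]
    rw [this]
    refine MeasurableSet.iInter fun n => ?_
    by_cases h : N ≤ n
    · simp only [h, true_implies]
      exact measurableSet_le measurable_const (birkhoff_meas T.measurable hf n).abs
    · simp only [h, false_implies]
      exact MeasurableSet.univ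
  have hApos : 0 < μ (Aset ε N) := hkN.bot_lt
  exact atkinson_aux μ (⇑T) T.measurable hT.toMeasurePreserving f hf ε hε (max N 1)
    (le_max_right N 1) (Aset ε N) hAmeas hApos
    (fun x hx n hn => hx n (le_trans (le_max_left N 1) hn)) hwlln
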